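/- Let X be a non-empty set and let γ : X → [0,+∞), J : X → ℝ be two functions such that γ(x₀) = J(x₀) = 0 for some x₀ ∈ X. Assume that J takes at least four values. Let φ : ]−osc_X J, osc_X J[ → [0,+∞) be a continuous function such that (1) φ⁻¹(0) = {0}, and (2) min{ liminf_{t→(−osc_X J)⁺} φ(t), liminf_{t→(osc_X J)⁻} φ(t) } > 0. Put θ = inf { γ(x)/φ(J(x)) : x ∈ X, inf_X J < J(x) < sup_X J, J(x) ≠ 0 }. Then, for each μ > θ, one has sup_{λ ∈ ]inf_X J, sup_X J[} inf_{x∈X} ( γ(x) − μ·φ(J(x) − λ) ) < inf_{x∈X} sup_{λ ∈ ]inf_X J, sup_X J[} ( γ(x) − μ·φ(J(x) − λ) ). -/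

import Mathlib

open Filter Set Topology

private lemma ereal_sub_lt {A B : EReal} (hA : A ≠ ⊤) {s t : ℝ}
    (hs : (s : EReal) ≤ B) (ht : A ≤ (t : EReal))
    (hst : (s : EReal) < B ∨ A < (t : EReal)) :
    ((s - t : ℝ) : EReal) < B - A := by
  induction B with
  | bot => exact absurd hs (by simp)
  | top =>
    induction A with
    | bot => rw [EReal.top_sub_bot]; exact EReal.coe_lt_top _
    | coe A => rw [EReal.top_sub_coe]; exact EReal.coe_lt_top _
    | top => exact absurd rfl hA
  | coe B =>
    induction A with
    | bot => rw [EReal.coe_sub_bot]; exact EReal.coe_lt_top _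
    | coe A =>
      rw [← EReal.coe_sub, EReal.coe_lt_coe_iff]
      rcases hst with h | h
      · have h1 := EReal.coe_lt_coe_iff.1 h
        have h2 := EReal.coe_le_coe_iff.1 ht
        linarith
      · have h1 := EReal.coe_le_coe_iff.1 hs
        have h2 := EReal.coe_lt_coe_iff.1 h
        linarith
    | top => exact absurd rfl hA

private lemma ereal_neg_sub_lt {A B : EReal} (hA : A ≠ ⊤) {s t : ℝ}
    (ht : (t : EReal) ≤ B) (hsA : A ≤ (s : EReal))
    (hst : (t : EReal) < B ∨ A < (s : EReal)) :
    -(B - A) < ((s - t : ℝ) : EReal) := by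
  have h := ereal_sub_lt hA ht hsA hst
  have h2 : -(B - A) < -((t - s : ℝ) : EReal) := EReal.neg_lt_neg_iff.2 h
  calc -(B - A) < -((t - s : ℝ) : EReal) := h2
    _ = ((s - t : ℝ) : EReal) := by rw [← EReal.coe_neg]; norm_num

private lemma ereal_top_sub {A : EReal} (hA : A ≠ ⊤) : (⊤ : EReal) - A = ⊤ := by
  induction A with
  | bot => exact EReal.top_sub_bot
  | coe A => exact EReal.top_sub_coe A
  | top => exact absurd rfl hA


/-- Proposition 1 of the paper. `X` is a non-empty set, `γ : X → [0,∞)`,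
`J : X → ℝ`, with `γ(x₀) = J(x₀) = 0` for some `x₀`, `J` taking at least
four values; `φ` is a continuous non-negative function on
`]-osc_X J, osc_X J[` (where `osc_X J = sup_X J - inf_X J`, possibly `+∞`)
vanishing exactly at `0`, with positive lower limits at the two endpoints.
With `θ = inf { γ(x)/φ(J(x)) : inf_X J < J(x) < sup_X J, J(x) ≠ 0 }`,
for every `μ > θ` one has
`sup_{λ ∈ ]inf J, sup J[} inf_x (γ(x) - μ φ(J(x)-λ)) <
 inf_x sup_{λ ∈ ]inf J, sup J[} (γ(x) - μ φ(J(x)-λ))`.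
Infima and suprema that may be infinite are taken in `EReal`. -/
theorem proposition_one
    {X : Type*} (γ : X → ℝ) (J : X → ℝ) (x₀ : X)
    (hγnn : ∀ x, 0 ≤ γ x) (hγ₀ : γ x₀ = 0) (hJ₀ : J x₀ = 0)
    -- `J` takes at least four values
    (h4 : ∃ x₁ x₂ x₃ x₄ : X, J x₁ ≠ J x₂ ∧ J x₁ ≠ J x₃ ∧ J x₁ ≠ J x₄ ∧
      J x₂ ≠ J x₃ ∧ J x₂ ≠ J x₄ ∧ J x₃ ≠ J x₄)
    (φ : ℝ → ℝ)
    -- `φ` is defined, continuous and non-negative on `]-osc_X J, osc_X J[`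
    (hφcont : ContinuousOn φ
      {t : ℝ | -((⨆ x : X, (J x : EReal)) - ⨅ x : X, (J x : EReal)) < (t : EReal) ∧
        (t : EReal) < (⨆ x : X, (J x : EReal)) - ⨅ x : X, (J x : EReal)})
    (hφnn : ∀ t : ℝ,
      -((⨆ x : X, (J x : EReal)) - ⨅ x : X, (J x : EReal)) < (t : EReal) →
      (t : EReal) < (⨆ x : X, (J x : EReal)) - ⨅ x : X, (J x : EReal) →
      0 ≤ φ t)
    -- condition (1): `φ⁻¹(0) = {0}`
    (hφzero : ∀ t : ℝ,
      -((⨆ x : X, (J x : EReal)) - ⨅ x : X, (J x : EReal)) < (t : EReal) →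
      (t : EReal) < (⨆ x : X, (J x : EReal)) - ⨅ x : X, (J x : EReal) →
      (φ t = 0 ↔ t = 0))
    -- condition (2): positive lower limits at the endpoints of the interval
    (hφlim₁ : 0 < liminf (fun t : ℝ => (φ t : EReal))
      (comap (fun t : ℝ => (t : EReal))
        (𝓝[>] (-((⨆ x : X, (J x : EReal)) - ⨅ x : X, (J x : EReal))))))
    (hφlim₂ : 0 < liminf (fun t : ℝ => (φ t : EReal))
      (comap (fun t : ℝ => (t : EReal))
        (𝓝[<] ((⨆ x : X, (J x : EReal)) - ⨅ x : X, (J x : EReal)))))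
    -- `θ`
    (θ : ℝ)
    (hθ : θ = sInf {r : ℝ | ∃ x : X,
      (⨅ y : X, (J y : EReal)) < (J x : EReal) ∧
      (J x : EReal) < (⨆ y : X, (J y : EReal)) ∧ J x ≠ 0 ∧
      r = γ x / φ (J x)})
    (μ : ℝ) (hμ : θ < μ) :
    (⨆ lam : ℝ, ⨆ _ : (⨅ y : X, (J y : EReal)) < (lam : EReal) ∧
        (lam : EReal) < (⨆ y : X, (J y : EReal)),
      ⨅ x : X, ((γ x - μ * φ (J x - lam) : ℝ) : EReal)) <
    ⨅ x : X, ⨆ lam : ℝ, ⨆ _ : (⨅ y : X, (J y : EReal)) < (lam : EReal) ∧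
        (lam : EReal) < (⨆ y : X, (J y : EReal)),
      ((γ x - μ * φ (J x - lam) : ℝ) : EReal) := by
  classical
  set a : EReal := ⨅ y : X, (J y : EReal) with ha_def
  set b : EReal := ⨆ y : X, (J y : EReal) with hb_def
  obtain ⟨x₁, x₂, x₃, x₄, h12, h13, h14, h23, h24, h34⟩ := h4
  have hJa : ∀ x, a ≤ (J x : EReal) := fun x => iInf_le _ x
  have hJb : ∀ x, (J x : EReal) ≤ b := fun x => le_iSup (fun y : X => (J y : EReal)) x
  have ha0 : a ≤ ((0 : ℝ) : EReal) := by have := hJa x₀; rwa [hJ₀] at this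
  have hb0 : ((0 : ℝ) : EReal) ≤ b := by have := hJb x₀; rwa [hJ₀] at this
  have haT : a ≠ ⊤ := fun h => by simp [h] at ha0
  have hbB : b ≠ ⊥ := fun h => by simp [h] at hb0
  have hcoe : ∀ u v : X, (J u : EReal) = (J v : EReal) → J u = J v := fun u v h => by
    exact_mod_cast h
  have hab : a < b := by
    rcases lt_or_ge a b with h | h
    · exact h
    · exact absurd (hcoe x₁ x₂ (le_antisymm ((hJb x₁).trans (h.trans (hJa x₂)))
        ((hJb x₂).trans (h.trans (hJa x₁))))) h12
  -- oscillation is positive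
  have hstrict : ((0 : ℝ) : EReal) < b ∨ a < ((0 : ℝ) : EReal) := by
    rcases eq_or_lt_of_le ha0 with h | h
    · exact Or.inl (h ▸ hab)
    · exact Or.inr h
  have hosc0 : ((0 : ℝ) : EReal) < b - a := by
    have := ereal_sub_lt haT hb0 ha0 hstrict
    simpa using this
  have hnegosc : -(b - a) < ((0 : ℝ) : EReal) := by
    have := EReal.neg_lt_neg_iff.2 hosc0
    simpa using this
  -- domain facts
  have hdomsub : ∀ s lam : ℝ, a ≤ (s : EReal) → (s : EReal) ≤ b →
      a < (lam : EReal) → (lam : EReal) < b →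
      -(b - a) < ((s - lam : ℝ) : EReal) ∧ ((s - lam : ℝ) : EReal) < b - a :=
    fun s lam hs1 hs2 h1 h2 =>
      ⟨ereal_neg_sub_lt haT h2.le hs1 (Or.inl h2), ereal_sub_lt haT hs2 h1.le (Or.inr h1)⟩
  have hdomJ : ∀ t : ℝ, a < (t : EReal) → (t : EReal) < b →
      -(b - a) < (t : EReal) ∧ (t : EReal) < b - a := by
    intro t h1 h2
    constructor
    · have := ereal_neg_sub_lt haT (t := 0) hb0 h1.le (Or.inr h1)
      simpa using this
    · have := ereal_sub_lt haT (t := 0) h2.le ha0 (Or.inl h2)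
      simpa using this
  have h0D : -(b - a) < ((0 : ℝ) : EReal) ∧ ((0 : ℝ) : EReal) < b - a := ⟨hnegosc, hosc0⟩
  -- the open domain of φ
  set D : Set ℝ := {t : ℝ | -(b - a) < (t : EReal) ∧ (t : EReal) < b - a} with hD_def
  have hDopen : IsOpen D := by
    have : D = (fun t : ℝ => (t : EReal)) ⁻¹' (Ioo (-(b - a)) (b - a)) := rfl
    rw [this]
    exact isOpen_Ioo.preimage continuous_coe_real_ereal
  -- there is a point with value strictly between and nonzero
  have hgood : ∃ x : X, a < (J x : EReal) ∧ (J x : EReal) < b ∧ J x ≠ 0 := by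
    by_contra hcon
    push_neg at hcon
    have hx : ∀ x : X, (J x : EReal) = a ∨ (J x : EReal) = b ∨ (J x : EReal) = ((0:ℝ) : EReal) := by
      intro x
      rcases eq_or_lt_of_le (hJa x) with h1 | h1
      · exact Or.inl h1.symm
      rcases eq_or_lt_of_le (hJb x) with h2 | h2
      · exact Or.inr (Or.inl h2)
      · exact Or.inr (Or.inr (by exact_mod_cast congrArg (fun r : ℝ => (r : EReal)) (hcon x h1 h2)))
    rcases hx x₁ with e1 | e1 | e1 <;> rcases hx x₂ with e2 | e2 | e2 <;>
      rcases hx x₃ with e3 | e3 | e3 <;> rcases hx x₄ with e4 | e4 | e4 <;>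
      first
        | exact h12 (hcoe x₁ x₂ (e1.trans e2.symm))
        | exact h13 (hcoe x₁ x₃ (e1.trans e3.symm))
        | exact h14 (hcoe x₁ x₄ (e1.trans e4.symm))
        | exact h23 (hcoe x₂ x₃ (e2.trans e3.symm))
        | exact h24 (hcoe x₂ x₄ (e2.trans e4.symm))
        | exact h34 (hcoe x₃ x₄ (e3.trans e4.symm))
  -- θ ≥ 0 and extraction of a good point with small ratio
  set S : Set ℝ := {r : ℝ | ∃ x : X, a < (J x : EReal) ∧ (J x : EReal) < b ∧ J x ≠ 0 ∧
      r = γ x / φ (J x)} with hS_def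
  have hSne : S.Nonempty := by
    obtain ⟨x, h1, h2, h3⟩ := hgood
    exact ⟨γ x / φ (J x), x, h1, h2, h3, rfl⟩
  have hSnn : ∀ r ∈ S, (0 : ℝ) ≤ r := by
    rintro r ⟨x, h1, h2, h3, rfl⟩
    obtain ⟨d1, d2⟩ := hdomJ (J x) h1 h2
    exact div_nonneg (hγnn x) (hφnn (J x) d1 d2)
  have hθ0 : 0 ≤ θ := hθ ▸ le_csInf hSne hSnn
  have hμpos : 0 < μ := lt_of_le_of_lt hθ0 hμ
  obtain ⟨r, hrS, hrμ⟩ : ∃ r ∈ S, r < μ := exists_lt_of_csInf_lt hSne (hθ ▸ hμ)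
  obtain ⟨xb, hb1, hb2, hb3, rfl⟩ := hrS
  have hxbD := hdomJ (J xb) hb1 hb2
  have hφxb : 0 < φ (J xb) := by
    rcases eq_or_lt_of_le (hφnn (J xb) hxbD.1 hxbD.2) with h | h
    · exact absurd ((hφzero (J xb) hxbD.1 hxbD.2).1 h.symm) hb3
    · exact h
  have hγb : γ xb < μ * φ (J xb) := by
    rw [div_lt_iff₀ hφxb] at hrμ
    linarith
  -- endpoint lower bounds for φ
  obtain ⟨δa, hδa, c, hcosc, hc⟩ :
      ∃ δa : ℝ, 0 < δa ∧ ∃ c : ℝ, (c : EReal) < b - a ∧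
        ∀ t : ℝ, c < t → (t : EReal) < b - a → δa ≤ φ t := by
    obtain ⟨δa, hδa1, hδa2⟩ := EReal.exists_between_coe_real hφlim₂
    have hev := Filter.eventually_lt_of_lt_liminf hδa2
    rw [Filter.eventually_comap] at hev
    obtain ⟨L, hL, hsub⟩ := (mem_nhdsLT_iff_exists_Ioo_subset' hosc0).1 hev
    obtain ⟨c, hc1, hc2⟩ := EReal.exists_between_coe_real hL
    refine ⟨δa, by exact_mod_cast hδa1, c, hc2, fun t ht1 ht2 => ?_⟩
    have hmem : (t : EReal) ∈ Ioo L (b - a) :=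
      ⟨lt_trans hc1 (by exact_mod_cast ht1), ht2⟩
    have := hsub hmem t rfl
    exact le_of_lt (by exact_mod_cast this)
  obtain ⟨δb, hδb, c', hcosc', hc'⟩ :
      ∃ δb : ℝ, 0 < δb ∧ ∃ c' : ℝ, -(b - a) < (c' : EReal) ∧
        ∀ t : ℝ, t < c' → -(b - a) < (t : EReal) → δb ≤ φ t := by
    obtain ⟨δb, hδb1, hδb2⟩ := EReal.exists_between_coe_real hφlim₁
    have hev := Filter.eventually_lt_of_lt_liminf hδb2
    rw [Filter.eventually_comap] at hev
    obtain ⟨U, hU, hsub⟩ := (mem_nhdsGT_iff_exists_Ioo_subset' hnegosc).1 hev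
    obtain ⟨c', hc1, hc2⟩ := EReal.exists_between_coe_real hU
    refine ⟨δb, by exact_mod_cast hδb1, c', hc1, fun t ht1 ht2 => ?_⟩
    have hmem : (t : EReal) ∈ Ioo (-(b - a)) U :=
      ⟨ht2, lt_trans (by exact_mod_cast ht1) hc2⟩
    have := hsub hmem t rfl
    exact le_of_lt (by exact_mod_cast this)
  -- left cutoff
  obtain ⟨l, hl1, hl2⟩ :
      ∃ l : ℝ, (∀ lam : ℝ, a < (lam : EReal) → lam < l → c < -lam) ∧
        (∀ lam : ℝ, l ≤ lam →
          ((0 - lam : ℝ) : EReal) < b - a ∧ ((J xb - lam : ℝ) : EReal) < b - a) := by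
    rcases eq_or_ne a ⊥ with hA | hA
    · refine ⟨-c, fun lam _ hlt => by linarith, fun lam _ => ?_⟩
      have hT : b - a = ⊤ := by rw [hA, EReal.sub_bot hbB]
      rw [hT]
      exact ⟨EReal.coe_lt_top _, EReal.coe_lt_top _⟩
    · obtain ⟨aR, haR⟩ : ∃ aR : ℝ, a = (aR : EReal) := ⟨a.toReal, (EReal.coe_toReal haT hA).symm⟩
      refine ⟨max (-c) aR, fun lam hgt hlt => ?_, fun lam hge => ?_⟩
      · have h1 : aR < lam := by rw [haR] at hgt; exact_mod_cast hgt
        rcases lt_max_iff.1 hlt with h | h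
        · linarith
        · linarith
      · have h1 : aR ≤ lam := le_trans (le_max_right _ _) hge
        have h2 : -lam ≤ c := by
          have := le_trans (le_max_left (-c) aR) hge; linarith
        have haLam : a ≤ (lam : EReal) := by rw [haR]; exact_mod_cast h1
        constructor
        · calc ((0 - lam : ℝ) : EReal) ≤ (c : EReal) := by exact_mod_cast (by linarith : (0 - lam : ℝ) ≤ c)
            _ < b - a := hcosc
        · exact ereal_sub_lt haT (hJb xb) haLam (Or.inl hb2)
  -- right cutoff
  obtain ⟨rr, hr1, hr2⟩ :
      ∃ rr : ℝ, (∀ lam : ℝ, (lam : EReal) < b → rr < lam → -lam < c') ∧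
        (∀ lam : ℝ, lam ≤ rr →
          -(b - a) < ((0 - lam : ℝ) : EReal) ∧ -(b - a) < ((J xb - lam : ℝ) : EReal)) := by
    rcases eq_or_ne b ⊤ with hB | hB
    · refine ⟨-c', fun lam _ hlt => by linarith, fun lam _ => ?_⟩
      have hT : b - a = ⊤ := by rw [hB]; exact ereal_top_sub haT
      rw [hT, EReal.neg_top]
      exact ⟨EReal.bot_lt_coe _, EReal.bot_lt_coe _⟩
    · obtain ⟨bR, hbR⟩ : ∃ bR : ℝ, b = (bR : EReal) := ⟨b.toReal, (EReal.coe_toReal hB hbB).symm⟩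
      refine ⟨min (-c') bR, fun lam hgt hlt => ?_, fun lam hge => ?_⟩
      · have h1 : lam < bR := by rw [hbR] at hgt; exact_mod_cast hgt
        rcases min_lt_iff.1 hlt with h | h
        · linarith
        · linarith
      · have h1 : lam ≤ bR := le_trans hge (min_le_right _ _)
        have h2 : c' ≤ -lam := by
          have := le_trans hge (min_le_left (-c') bR); linarith
        have hLamb : (lam : EReal) ≤ b := by rw [hbR]; exact_mod_cast h1
        constructor
        · calc -(b - a) < (c' : EReal) := hcosc'
            _ ≤ ((0 - lam : ℝ) : EReal) := by exact_mod_cast (by linarith : c' ≤ (0 - lam : ℝ))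
        · exact ereal_neg_sub_lt haT hLamb (hJa xb) (Or.inr hb1)
  -- the comparison function
  set g : ℝ → ℝ := fun lam => min (γ x₀ - μ * φ (J x₀ - lam)) (γ xb - μ * φ (J xb - lam))
    with hg_def
  have hgD : ∀ lam ∈ Icc l rr, (J x₀ - lam) ∈ D ∧ (J xb - lam) ∈ D := by
    intro lam hlam
    obtain ⟨hu1, hu2⟩ := hl2 lam hlam.1
    obtain ⟨hv1, hv2⟩ := hr2 lam hlam.2
    rw [hJ₀]
    exact ⟨⟨hv1, hu1⟩, ⟨hv2, hu2⟩⟩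
  have hgcont : ContinuousOn g (Icc l rr) := by
    intro lam hlam
    apply ContinuousAt.continuousWithinAt
    obtain ⟨hm1, hm2⟩ := hgD lam hlam
    have hc1 : ContinuousAt φ (J x₀ - lam) := hφcont.continuousAt (hDopen.mem_nhds hm1)
    have hc2 : ContinuousAt φ (J xb - lam) := hφcont.continuousAt (hDopen.mem_nhds hm2)
    have hsub1 : ContinuousAt (fun t : ℝ => J x₀ - t) lam :=
      (continuous_const.sub continuous_id).continuousAt
    have hsub2 : ContinuousAt (fun t : ℝ => J xb - t) lam :=
      (continuous_const.sub continuous_id).continuousAt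
    exact ContinuousAt.inf
      (continuousAt_const.sub (continuousAt_const.mul (hc1.comp hsub1)))
      (continuousAt_const.sub (continuousAt_const.mul (hc2.comp hsub2)))
  have hgneg : ∀ lam ∈ Icc l rr, g lam < 0 := by
    intro lam hlam
    by_cases h0 : lam = 0
    · subst h0
      refine lt_of_le_of_lt (min_le_right _ _) ?_
      rw [sub_zero]
      linarith
    · obtain ⟨hm1, _⟩ := hgD lam hlam
      have hne : J x₀ - lam ≠ 0 := by rw [hJ₀]; simpa using h0
      have hpos : 0 < φ (J x₀ - lam) := by
        rcases eq_or_lt_of_le (hφnn _ hm1.1 hm1.2) with h | h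
        · exact absurd ((hφzero _ hm1.1 hm1.2).1 h.symm) hne
        · exact h
      refine lt_of_le_of_lt (min_le_left _ _) ?_
      rw [hγ₀]
      have := mul_pos hμpos hpos
      linarith
  -- bound outside the compact interval
  have hout : ∀ lam : ℝ, a < (lam : EReal) → (lam : EReal) < b → (lam < l ∨ rr < lam) →
      g lam ≤ -(min (μ * δa) (μ * δb)) := by
    intro lam h1 h2 hcase
    have hdom0 := hdomsub 0 lam ha0 hb0 h1 h2
    have hkey : ∀ d : ℝ, d ≤ φ (-lam) → min (μ * δa) (μ * δb) ≤ μ * d →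
        g lam ≤ -(min (μ * δa) (μ * δb)) := by
      intro d hd hmin
      have : g lam ≤ γ x₀ - μ * φ (J x₀ - lam) := min_le_left _ _
      rw [hγ₀, hJ₀, zero_sub, zero_sub] at this
      have h3 : μ * d ≤ μ * φ (-lam) := mul_le_mul_of_nonneg_left hd hμpos.le
      linarith
    rcases hcase with h | h
    · have h3 : c < -lam := hl1 lam h1 h
      have h4 : ((-lam : ℝ) : EReal) < b - a := by
        have := hdom0.2; rwa [zero_sub] at this
      exact hkey δa (hc (-lam) h3 h4) (min_le_left _ _)
    · have h3 : -lam < c' := hr1 lam h2 h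
      have h4 : -(b - a) < ((-lam : ℝ) : EReal) := by
        have := hdom0.1; rwa [zero_sub] at this
      exact hkey δb (hc' (-lam) h3 h4) (min_le_right _ _)
  -- the main uniform bound
  have hmain : ∃ d : ℝ, 0 < d ∧
      ∀ lam : ℝ, a < (lam : EReal) → (lam : EReal) < b → g lam ≤ -d := by
    by_cases hlr : l ≤ rr
    · obtain ⟨ls, hls, hmax⟩ :=
        isCompact_Icc.exists_isMaxOn (nonempty_Icc.2 hlr) hgcont
      refine ⟨min (min (μ * δa) (μ * δb)) (-(g ls)),
        lt_min (lt_min (mul_pos hμpos hδa) (mul_pos hμpos hδb)) (neg_pos.2 (hgneg ls hls)),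
        fun lam h1 h2 => ?_⟩
      by_cases hmem : lam ∈ Icc l rr
      · have hle : g lam ≤ g ls := hmax hmem
        have := min_le_right (min (μ * δa) (μ * δb)) (-(g ls))
        linarith
      · have hcase : lam < l ∨ rr < lam := by
          rcases lt_or_ge lam l with h | h
          · exact Or.inl h
          · rcases lt_or_ge rr lam with h' | h'
            · exact Or.inr h'
            · exact absurd ⟨h, h'⟩ hmem
        have := hout lam h1 h2 hcase
        have := min_le_left (min (μ * δa) (μ * δb)) (-(g ls))
        linarith
    · refine ⟨min (μ * δa) (μ * δb),
        lt_min (mul_pos hμpos hδa) (mul_pos hμpos hδb), fun lam h1 h2 => ?_⟩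
      have hcase : lam < l ∨ rr < lam := by
        rcases lt_or_ge lam l with h | h
        · exact Or.inl h
        · rcases lt_or_ge rr lam with h' | h'
          · exact Or.inr h'
          · exact absurd (le_trans h h') hlr
      exact hout lam h1 h2 hcase
  obtain ⟨d, hd, hbound⟩ := hmain
  -- approximation: choosing lam near J x
  have happrox : ∀ (x : X) (δ : ℝ), 0 < δ →
      ∃ lam : ℝ, a < (lam : EReal) ∧ (lam : EReal) < b ∧ |J x - lam| < δ := by
    intro x δ hδ
    rcases eq_or_lt_of_le (hJa x) with h1 | h1
    · have hlt : (J x : EReal) < min b ((J x + δ : ℝ) : EReal) :=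
        lt_min (h1 ▸ hab) (by exact_mod_cast (by linarith : J x < J x + δ))
      obtain ⟨lam, hg1, hg2⟩ := EReal.exists_between_coe_real hlt
      have hlb : lam < J x + δ := by
        exact_mod_cast lt_of_lt_of_le hg2 (min_le_right _ _)
      have hgt : J x < lam := by exact_mod_cast hg1
      refine ⟨lam, h1 ▸ hg1, lt_of_lt_of_le hg2 (min_le_left _ _), ?_⟩
      rw [abs_lt]; constructor <;> linarith
    · rcases eq_or_lt_of_le (hJb x) with h2 | h2
      · have hlt : max a ((J x - δ : ℝ) : EReal) < (J x : EReal) :=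
          max_lt h1 (by exact_mod_cast (by linarith : J x - δ < J x))
        obtain ⟨lam, hg1, hg2⟩ := EReal.exists_between_coe_real hlt
        have hlb : J x - δ < lam := by
          exact_mod_cast lt_of_le_of_lt (le_max_right a ((J x - δ : ℝ) : EReal)) hg1
        have hgt : lam < J x := by exact_mod_cast hg2
        refine ⟨lam, lt_of_le_of_lt (le_max_left _ _) hg1, h2 ▸ hg2, ?_⟩
        rw [abs_lt]; constructor <;> linarith
      · exact ⟨J x, h1, h2, by simpa using hδ⟩
  -- RHS is nonnegative
  have hc0 : ContinuousAt φ 0 := hφcont.continuousAt (hDopen.mem_nhds h0D)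
  have hφ0 : φ 0 = 0 := (hφzero 0 h0D.1 h0D.2).2 rfl
  have hRHS : ∀ x : X, ((0 : ℝ) : EReal) ≤ ⨆ lam : ℝ, ⨆ _ : a < (lam : EReal) ∧
      (lam : EReal) < b, ((γ x - μ * φ (J x - lam) : ℝ) : EReal) := by
    intro x
    by_contra hneg
    push_neg at hneg
    obtain ⟨u, hu1, hu2⟩ := EReal.exists_between_coe_real hneg
    have hu0 : u < 0 := by exact_mod_cast hu2
    have hε : 0 < -u / μ := div_pos (by linarith) hμpos
    have hev : ∀ᶠ t in 𝓝 (0 : ℝ), φ t < -u / μ := by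
      have htend : Tendsto φ (𝓝 (0 : ℝ)) (𝓝 (φ 0)) := hc0
      have : ∀ᶠ y in 𝓝 (φ 0), y < -u / μ := eventually_lt_nhds (by rw [hφ0]; exact hε)
      exact htend.eventually this
    obtain ⟨δ, hδpos, hδ⟩ := Metric.eventually_nhds_iff.1 hev
    obtain ⟨lam, hm1, hm2, hm3⟩ := happrox x δ hδpos
    have hφlt : φ (J x - lam) < -u / μ := hδ (by simpa [Real.dist_eq] using hm3)
    have hterm : (u : EReal) ≤ ((γ x - μ * φ (J x - lam) : ℝ) : EReal) := by
      apply EReal.coe_le_coe_iff.2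
      have h3 : μ * φ (J x - lam) < μ * (-u / μ) := mul_lt_mul_of_pos_left hφlt hμpos
      have h4 : μ * (-u / μ) = -u := by field_simp
      have := hγnn x
      linarith
    have hle : ((γ x - μ * φ (J x - lam) : ℝ) : EReal) ≤ ⨆ lam : ℝ,
        ⨆ _ : a < (lam : EReal) ∧ (lam : EReal) < b,
          ((γ x - μ * φ (J x - lam) : ℝ) : EReal) :=
      le_iSup₂ (f := fun lam _ => ((γ x - μ * φ (J x - lam) : ℝ) : EReal)) lam ⟨hm1, hm2⟩
    exact absurd (lt_of_le_of_lt (hterm.trans hle) hu1) (lt_irrefl _)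
  -- LHS bound
  have hLHS : (⨆ lam : ℝ, ⨆ _ : a < (lam : EReal) ∧ (lam : EReal) < b,
      ⨅ x : X, ((γ x - μ * φ (J x - lam) : ℝ) : EReal)) ≤ ((-d : ℝ) : EReal) := by
    apply iSup_le
    intro lam
    apply iSup_le
    intro hP
    have hb1 := hbound lam hP.1 hP.2
    refine le_trans ?_ (EReal.coe_le_coe_iff.2 hb1)
    rcases le_total (γ x₀ - μ * φ (J x₀ - lam)) (γ xb - μ * φ (J xb - lam)) with h | h
    · rw [hg_def]
      simp only [min_eq_left h]
      exact iInf_le _ x₀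
    · rw [hg_def]
      simp only [min_eq_right h]
      exact iInf_le _ xb
  calc (⨆ lam : ℝ, ⨆ _ : a < (lam : EReal) ∧ (lam : EReal) < b,
      ⨅ x : X, ((γ x - μ * φ (J x - lam) : ℝ) : EReal))
      ≤ ((-d : ℝ) : EReal) := hLHS
    _ < ((0 : ℝ) : EReal) := by exact_mod_cast (by linarith : (-d : ℝ) < 0)
    _ ≤ ⨅ x : X, ⨆ lam : ℝ, ⨆ _ : a < (lam : EReal) ∧ (lam : EReal) < b,
        ((γ x - μ * φ (J x - lam) : ℝ) : EReal) := le_iInf hRHS
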